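/- Let A : ℝ → ℝ be a twice differentiable function satisfying the Airy equation A''(x) = x·A(x) for all x, and let I ⊆ ℝ be an open interval such that A(-2^{-1/3}s) ≠ 0 for all s ∈ I. Define q(s) = -2^{-1/3}·A'(-2^{-1/3}s)/A(-2^{-1/3}s) for s ∈ I. Then q is twice differentiable on I and satisfies the Painlevé II equation with ν = 1/2: q''(s) = 2q(s)³ + s·q(s) - 1/2 for all s ∈ I. -/

import Mathlib

/-- q(s) = -2^{-1/3}·A'(-2^{-1/3}s)/A(-2^{-1/3}s) built from an Airy function satisfies the
Painlevé II equation with ν = 1/2 on an interval where the denominator does not vanish. -/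
theorem stmt_10 (A A' : ℝ → ℝ)
    (hA : ∀ x : ℝ, HasDerivAt A (A' x) x)
    (hA' : ∀ x : ℝ, HasDerivAt A' (x * A x) x)
    (I : Set ℝ) (hIopen : IsOpen I) (hIconn : I.OrdConnected)
    (hA0 : ∀ s ∈ I, A (-(2 : ℝ) ^ (-(1 : ℝ) / 3) * s) ≠ 0)
    (q : ℝ → ℝ)
    (hq : ∀ s : ℝ, q s = -(2 : ℝ) ^ (-(1 : ℝ) / 3) *
      A' (-(2 : ℝ) ^ (-(1 : ℝ) / 3) * s) / A (-(2 : ℝ) ^ (-(1 : ℝ) / 3) * s)) :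
    (∀ s ∈ I, DifferentiableAt ℝ q s) ∧
    ∀ s ∈ I, HasDerivAt (deriv q) (2 * q s ^ 3 + s * q s - 1 / 2) s := by
  set c : ℝ := (2 : ℝ) ^ (-(1 : ℝ) / 3) with hc
  have hc3 : c ^ 3 = 1 / 2 := by
    rw [hc, ← Real.rpow_natCast ((2:ℝ) ^ (-(1:ℝ)/3)) 3, ← Real.rpow_mul (by norm_num)]
    norm_num
  -- q has derivative -(q s)^2 - s/2 on I
  have key : ∀ s ∈ I, HasDerivAt q (-(q s)^2 - s/2) s := by
    intro s hs
    have hu : HasDerivAt (fun t : ℝ => -c * t) (-c) s := by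
      simpa using (hasDerivAt_id s).const_mul (-c)
    have hf : HasDerivAt (fun t : ℝ => A (-c * t)) (A' (-c * s) * (-c)) s :=
      (hA (-c * s)).comp s hu
    have hg : HasDerivAt (fun t : ℝ => -c * A' (-c * t))
        (-c * ((-c * s) * A (-c * s) * (-c))) s :=
      (((hA' (-c * s)).comp s hu)).const_mul (-c)
    have hne := hA0 s hs
    have hdiv := hg.div hf hne
    have hqe : q = fun t : ℝ => (-c * A' (-c * t)) / A (-c * t) := by
      funext t; exact hq t
    change HasDerivAt (fun t : ℝ => (-c * A' (-c * t)) / A (-c * t)) _ s at hdiv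
    rw [← hqe] at hdiv
    convert hdiv using 1
    rw [hq s]
    field_simp
    ring_nf
    rw [hc3]
    have hne' : A (-(c*s)) ≠ 0 := by rwa [neg_mul] at hne
    field_simp
  refine ⟨fun s hs => (key s hs).differentiableAt, fun s hs => ?_⟩
  have hev : (fun t : ℝ => -(q t)^2 - t/2) =ᶠ[nhds s] deriv q := by
    filter_upwards [hIopen.mem_nhds hs] with t ht
    exact ((key t ht).deriv).symm
  have h2 : HasDerivAt (fun t : ℝ => -(q t)^2 - t/2)
      (-(2 * q s ^ 1 * (-(q s)^2 - s/2)) - 1/2) s := by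
    have := ((key s hs).pow 2).neg
    have hhalf : HasDerivAt (fun t : ℝ => t/2) (1/2) s := by
      simpa using (hasDerivAt_id s).div_const 2
    exact (this.sub hhalf).congr_deriv (by norm_num)
  have h3 := h2.congr_of_eventuallyEq hev.symm
  exact h3.congr_deriv (by ring)
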